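/- Let E be a ternary Dyck vector (a Dyck vector with all entries in {0,1,2}) and let S = 0 E 1 be the concatenation of a 0, then E, then a 1. Then len(S) = len(E) + 2, area(S) = area(E) + 1, dinv(S) = dinv(E) + len(E), and defc(S) = defc(E) + len(E) > defc(E). -/

import Mathlib

/-- dinv contribution of an entry coming from extended negative positions. -/
def negContrib (x : ℤ) : ℕ := (if x ≤ -1 then 1 else 0) + (if x ≤ -2 then 1 else 0)

/-- The diagonal inversion statistic of a quasi-Dyck vector, with the
convention `v_k = k - 1` for `k ≤ 0`. -/
def dinv (v : List ℤ) : ℕ :=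
  (Finset.univ.filter (fun p : Fin v.length × Fin v.length =>
      (p.1 : ℕ) < (p.2 : ℕ) ∧ (v.get p.1 - v.get p.2 = 0 ∨ v.get p.1 - v.get p.2 = 1))).card
  + (v.map negContrib).sum

def area (v : List ℤ) : ℤ := v.sum

def defc (v : List ℤ) : ℤ := (v.length.choose 2 : ℤ) - area v - (dinv v : ℤ)

/-- Quasi-Dyck vector: nonempty, starts with 0, consecutive increases ≤ 1. -/
def IsQDV (v : List ℤ) : Prop :=
  v.head? = some 0 ∧ ∀ i : ℕ, i + 1 < v.length → v.getD (i + 1) 0 ≤ v.getD i 0 + 1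

def IsDyck (v : List ℤ) : Prop := IsQDV v ∧ ∀ x ∈ v, 0 ≤ x

def stepRel (v w : List ℤ) : Prop := w = 0 :: v.map (· + 1)

def dyckEquiv : List ℤ → List ℤ → Prop := Relation.EqvGen stepRel

def dyckSetoid : Setoid (List ℤ) := Relation.EqvGen.setoid stepRel

abbrev DyckClass := Quotient dyckSetoid

def cls (v : List ℤ) : DyckClass := Quotient.mk dyckSetoid v

/-- Reduced Dyck vector: a Dyck vector that is not `0 z⁺` for a Dyck vector `z`. -/
def IsReducedDV (v : List ℤ) : Prop :=
  IsDyck v ∧ ¬ ∃ z : List ℤ, IsDyck z ∧ v = 0 :: z.map (· + 1)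

/-- The leader of a QDV: the largest `d` such that `v` starts with `0,1,...,d`. -/
def leader (v : List ℤ) : ℕ :=
  Nat.findGreatest (fun d => ∀ i, i ≤ d → v.getD i 0 = (i : ℤ)) (v.length - 1)

/-- Delete the leader symbol and append `leader - 1`. -/
def nuStep (v : List ℤ) : List ℤ :=
  v.take (leader v) ++ v.drop (leader v + 1) ++ [(leader v : ℤ) - 1]

def nuApplies (v : List ℤ) : Prop :=
  IsQDV v ∧ 2 ≤ v.length ∧ 0 ≤ v.getD 1 0 ∧ (leader v : ℤ) ≤ v.getLastD 0 + 2

/-- The map NU₁ on Dyck classes, as a relation. -/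
def nuClassRel (c c' : DyckClass) : Prop :=
  ∃ v, nuApplies v ∧ c = cls v ∧ c' = cls (nuStep v)

def stepOk (A : List ℤ) : Prop := ∀ i : ℕ, i + 1 < A.length → A.getD (i + 1) 0 ≤ A.getD i 0 + 1

def okA (A : List ℤ) : Prop :=
  A = [] ∨ ((∀ x ∈ A, x ≤ 2) ∧ 0 ≤ A.getLastD 0 ∧ stepOk A)

def okB (B : List ℤ) : Prop :=
  B = [] ∨ ((∀ x ∈ B, x ≤ 2) ∧ B.headD 0 ≤ 1 ∧ -1 ≤ B.getLastD 0 ∧ stepOk B)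

/-- The map NU₂ on Dyck classes, as a relation. -/
def nu2ClassRel (c c' : DyckClass) : Prop :=
  (∃ (h : ℕ) (A : List ℤ), 2 ≤ h ∧ okA A ∧
      c = cls ([0, 1] ++ List.replicate h (2:ℤ) ++ A ++ List.replicate (h - 1) (-1)) ∧
      c' = cls (List.replicate h (0:ℤ) ++ [1] ++ A ++ List.replicate h 1)) ∨
  (∃ (k : ℕ) (B : List ℤ), 1 ≤ k ∧ okB B ∧
      c = cls ([0, 1] ++ List.replicate k (2:ℤ) ++ B ++ List.replicate k (-1)) ∧
      c' = cls (List.replicate (k + 1) (0:ℤ) ++ B ++ [0] ++ List.replicate k 1))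

/-- The extended next-up map NU = NU₁ ∪ NU₂, as a relation on Dyck classes. -/
def nuRel (c c' : DyckClass) : Prop := nuClassRel c c' ∨ nu2ClassRel c c'

/-- An integer partition, given by its weakly decreasing list of positive parts. -/
def IsPartitionList (l : List ℕ) : Prop := l.Pairwise (· ≥ ·) ∧ ∀ x ∈ l, 0 < x

/-- `phi l n` = the QDV `(0 - λ_n, 1 - λ_{n-1}, ..., (n-1) - λ_1)`. -/
def phi (l : List ℕ) (n : ℕ) : List ℤ :=
  List.ofFn (fun i : Fin n => (i : ℤ) - (l.getD (n - 1 - (i : ℕ)) 0 : ℤ))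

def nuOne (g : List ℕ) : List ℕ :=
  (g.length + 1) :: (g.map (· - 1)).filter (fun x => 0 < x)

def ndOne (g : List ℕ) : List ℕ :=
  g.tail.map (· + 1) ++ List.replicate (g.headD 0 - g.length) 1

/-- dinv of a partition: number of cells with arm - leg ∈ {0,1}. -/
def pdinv (l : List ℕ) : ℕ :=
  (Finset.univ.filter (fun c : Fin l.length × Fin (l.headD 0) =>
    (c.2 : ℕ) < l.get c.1 ∧
      (l.get c.1 - 1 - (c.2 : ℕ) =
          (Finset.univ.filter (fun i' : Fin l.length =>
            (c.1 : ℕ) < (i' : ℕ) ∧ (c.2 : ℕ) < l.get i')).card ∨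
        l.get c.1 - 1 - (c.2 : ℕ) =
          (Finset.univ.filter (fun i' : Fin l.length =>
            (c.1 : ℕ) < (i' : ℕ) ∧ (c.2 : ℕ) < l.get i')).card + 1))).card

/-- `bWord [n_1, ..., n_r]` = `0 1^{n_1} 0 1^{n_2} ⋯ 0 1^{n_r}`. -/
def bWord (ns : List ℕ) : List ℤ :=
  (ns.map (fun m => (0:ℤ) :: List.replicate m 1)).flatten

/-- `msize [n_1, ..., n_r] = Σ i·n_i`, the size of the partition `(r^{n_r},...,1^{n_1})`. -/
def msize (ns : List ℕ) : ℕ :=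
  (List.zipWith (fun m i => m * i) ns (List.range' 1 ns.length)).sum

/-- The reduced Dyck vector `0 B_μ` of the tail initiator of a partition. -/
def tiVec (l : List ℕ) : List ℤ :=
  (0:ℤ) :: ((List.range' 1 (l.headD 0)).map
    (fun i => (0:ℤ) :: List.replicate (l.count i) (1:ℤ))).flatten

/-- `c` is the second-order tail initiator of the partition `l`: obtained from
`[0 B_μ]` by iterating the extended next-down map as long as possible. -/
def IsTI2 (l : List ℕ) (c : DyckClass) : Prop :=
  Relation.ReflTransGen (fun x y => nuRel y x) (cls (tiVec l)) c ∧ ∀ d, ¬ nuRel d c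

/-- `m` is the minimum triangle height of the Dyck class `c`. -/
def mindIs (c : DyckClass) (m : ℕ) : Prop :=
  ∃ v, IsReducedDV v ∧ c = cls v ∧ v.length = m

/-- Flagpole partition: `|μ| + 8 ≤ 2 mind(TI₂(μ))`. -/
def IsFlagpole (l : List ℕ) : Prop :=
  ∃ c m, IsTI2 l c ∧ mindIs c m ∧ l.sum + 8 ≤ 2 * m

/-- The Dyck vector `v(λ,a,ε) = 0 0 1 2^{a-ε} B_λ⁺ 1^ε`. -/
def vLam (ns : List ℕ) (a ε : ℕ) : List ℤ :=
  [0, 0, 1] ++ List.replicate (a - ε) (2:ℤ) ++ (bWord ns).map (· + 1) ++ List.replicate ε 1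

def pc (v : List ℤ) : ℕ :=
  (Finset.univ.filter (fun p : Fin v.length × Fin v.length =>
      (p.1 : ℕ) < (p.2 : ℕ) ∧ (v.get p.1 - v.get p.2 = 0 ∨ v.get p.1 - v.get p.2 = 1))).card

lemma pc_eq_sum (v : List ℤ) : pc v = ∑ i ∈ Finset.range v.length, ∑ j ∈ Finset.range v.length,
    if (i < j ∧ (v.getD i 0 - v.getD j 0 = 0 ∨ v.getD i 0 - v.getD j 0 = 1)) then 1 else 0 := by
  rw [pc, Finset.card_filter, Fintype.sum_prod_type]
  have hget : ∀ i : Fin v.length, v.get i = v.getD (i:ℕ) 0 := fun i => by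
    simp [List.getD_eq_getElem?_getD, List.getElem?_eq_getElem i.isLt]
  simp_rw [hget]
  rw [Fin.sum_univ_eq_sum_range (fun i => ∑ j : Fin v.length,
    if (i < (j:ℕ) ∧ (v.getD i 0 - v.getD (j:ℕ) 0 = 0 ∨ v.getD i 0 - v.getD (j:ℕ) 0 = 1)) then 1 else 0)]
  apply Finset.sum_congr rfl
  intro i _
  rw [Fin.sum_univ_eq_sum_range (fun j =>
    if (i < j ∧ (v.getD i 0 - v.getD j 0 = 0 ∨ v.getD i 0 - v.getD j 0 = 1)) then 1 else 0)]

lemma countP_eq_sum (p : ℤ → Bool) (v : List ℤ) :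
    v.countP p = ∑ i ∈ Finset.range v.length, if p (v.getD i 0) then 1 else 0 := by
  induction v with
  | nil => simp
  | cons a w ih =>
      rw [List.countP_cons, ih, List.length_cons, Finset.sum_range_succ']
      simp [add_comm]

lemma pc_cons (a : ℤ) (v : List ℤ) :
    pc (a :: v) = v.countP (fun x => decide (a - x = 0 ∨ a - x = 1)) + pc v := by
  rw [pc_eq_sum, pc_eq_sum, countP_eq_sum, List.length_cons, Finset.sum_range_succ']
  simp only [List.getD_cons_succ, List.getD_cons_zero]
  rw [add_comm]
  congr 1
  · rw [Finset.sum_range_succ']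
    simp
  · apply Finset.sum_congr rfl
    intro i _
    rw [Finset.sum_range_succ']
    simp

lemma pc_append (v : List ℤ) (b : ℤ) :
    pc (v ++ [b]) = pc v + v.countP (fun x => decide (x - b = 0 ∨ x - b = 1)) := by
  rw [pc_eq_sum, pc_eq_sum, countP_eq_sum]
  have hl : (v ++ [b]).length = v.length + 1 := by simp
  have hgb : (v ++ [b]).getD v.length 0 = b := by
    simp [List.getD_eq_getElem?_getD]
  have hg : ∀ i < v.length, (v ++ [b]).getD i 0 = v.getD i 0 := by
    intro i hi
    rw [List.getD_append _ _ _ _ hi]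
  rw [hl, Finset.sum_range_succ]
  have hlast : (∑ j ∈ Finset.range (v.length + 1),
      if (v.length < j ∧ ((v ++ [b]).getD v.length 0 - (v ++ [b]).getD j 0 = 0 ∨
        (v ++ [b]).getD v.length 0 - (v ++ [b]).getD j 0 = 1)) then 1 else 0) = 0 := by
    apply Finset.sum_eq_zero
    intro j hj
    rw [Finset.mem_range] at hj
    rw [if_neg]
    rintro ⟨h1, -⟩
    omega
  rw [hlast, add_zero]
  rw [← Finset.sum_add_distrib]
  apply Finset.sum_congr rfl
  intro i hi
  rw [Finset.mem_range] at hi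
  rw [Finset.sum_range_succ, hg i hi, hgb]
  congr 1
  · apply Finset.sum_congr rfl
    intro j hj
    rw [Finset.mem_range] at hj
    rw [hg j hj]
  · simp [hi]

lemma countP_tern (E : List ℤ) (h3 : ∀ x ∈ E, x = 0 ∨ x = 1 ∨ x = 2) :
    E.countP (fun x => decide ((0:ℤ) - x = 0 ∨ (0:ℤ) - x = 1)) +
    E.countP (fun x => decide (x - (1:ℤ) = 0 ∨ x - 1 = 1)) = E.length := by
  induction E with
  | nil => simp
  | cons a w ih =>
      have ha := h3 a (by simp)
      have hw := ih (fun x hx => h3 x (by simp [hx]))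
      rw [List.countP_cons, List.countP_cons, List.length_cons]
      rcases ha with rfl | rfl | rfl
      · rw [if_pos (by decide), if_neg (by decide)]; omega
      · rw [if_neg (by decide), if_pos (by decide)]; omega
      · rw [if_neg (by decide), if_pos (by decide)]; omega

theorem stmt4 (E : List ℤ) (hE : IsDyck E) (h3 : ∀ x ∈ E, x = 0 ∨ x = 1 ∨ x = 2) :
    ((0:ℤ) :: E ++ [1]).length = E.length + 2 ∧
    area ((0:ℤ) :: E ++ [1]) = area E + 1 ∧
    dinv ((0:ℤ) :: E ++ [1]) = dinv E + E.length ∧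
    defc ((0:ℤ) :: E ++ [1]) = defc E + E.length ∧
    defc E < defc ((0:ℤ) :: E ++ [1]) := by
  obtain ⟨⟨hhead, -⟩, hnn⟩ := hE
  have hne : E ≠ [] := by rintro rfl; simp at hhead
  have hn1 : 1 ≤ E.length := List.length_pos_iff.mpr hne
  have hdinv : ∀ v, dinv v = pc v + (v.map negContrib).sum := fun v => rfl
  have hneg : ∀ x : ℤ, 0 ≤ x → negContrib x = 0 := by
    intro x hx; simp only [negContrib]; rw [if_neg (by omega), if_neg (by omega)]
  have hmapE : (E.map negContrib).sum = 0 := by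
    apply List.sum_eq_zero
    intro y hy
    simp only [List.mem_map] at hy
    obtain ⟨x, hx, rfl⟩ := hy
    exact hneg x (hnn x hx)
  have hmapS : (((0:ℤ) :: E ++ [1]).map negContrib).sum = 0 := by
    apply List.sum_eq_zero
    intro y hy
    simp only [List.mem_map] at hy
    obtain ⟨x, hx, rfl⟩ := hy
    apply hneg
    rcases List.mem_append.mp hx with hx | hx
    · rcases List.mem_cons.mp hx with rfl | hx
      · exact le_rfl
      · exact hnn x hx
    · simp at hx; omega
  have hpcS : pc ((0:ℤ) :: E ++ [1]) = pc E + E.length := by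
    rw [show (0:ℤ) :: E ++ [1] = ((0:ℤ) :: E) ++ [1] from rfl, pc_append, pc_cons,
      List.countP_cons]
    rw [if_neg (by decide)]
    have := countP_tern E h3
    omega
  have hlen : ((0:ℤ) :: E ++ [1]).length = E.length + 2 := by simp
  have harea : area ((0:ℤ) :: E ++ [1]) = area E + 1 := by
    simp [area]
  have hdS : dinv ((0:ℤ) :: E ++ [1]) = dinv E + E.length := by
    rw [hdinv, hdinv, hmapE, hmapS, hpcS]; omega
  have hch : ((E.length + 2).choose 2 : ℤ) = (E.length.choose 2 : ℤ) + 2 * E.length + 1 := by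
    have : (E.length + 2).choose 2 = E.length.choose 2 + (2 * E.length + 1) := by
      simp [Nat.choose_succ_succ, Nat.choose_one_right]
      ring
    rw [this]
    push_cast
    ring
  have hdefc : defc ((0:ℤ) :: E ++ [1]) = defc E + E.length := by
    rw [defc, defc, hlen, harea, hdS, hch]
    push_cast
    ring
  refine ⟨hlen, harea, hdS, hdefc, ?_⟩
  rw [hdefc]
  have : (0:ℤ) < E.length := by exact_mod_cast hn1
  linarith
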